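/- For μ > 0, z' ∈ ℝ, and y ≥ 0, the function g(z) = z − y·log z + (μ/2)(z − z')² on (0, ∞) attains its unique minimum at z* = (μz' − 1 + √((μz' − 1)² + 4μy)) / (2μ), provided y > 0; in particular z* > 0. -/

import Mathlib

/-- For `μ > 0`, `z' ∈ ℝ`, `y > 0`, the function
`g(z) = z - y log z + (μ/2)(z - z')²` on `(0, ∞)` attains its unique minimum at
`z* = (μz' - 1 + √((μz' - 1)² + 4μy)) / (2μ)`; in particular `z* > 0`. -/
theorem z_update_unique_min (μ z' y : ℝ) (hμ : 0 < μ) (hy : 0 < y) :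
    let zstar : ℝ := (μ * z' - 1 + Real.sqrt ((μ * z' - 1) ^ 2 + 4 * μ * y)) / (2 * μ)
    let g : ℝ → ℝ := fun z => z - y * Real.log z + (μ / 2) * (z - z') ^ 2
    0 < zstar ∧ ∀ z ∈ Set.Ioi (0 : ℝ), g zstar ≤ g z ∧ (z ≠ zstar → g zstar < g z) := by
  intro zstar g
  set a : ℝ := μ * z' - 1 with ha
  set s : ℝ := Real.sqrt (a ^ 2 + 4 * μ * y) with hs
  have hs0 : 0 ≤ s := Real.sqrt_nonneg _
  have hs2 : s ^ 2 = a ^ 2 + 4 * μ * y := by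
    rw [hs, Real.sq_sqrt]; nlinarith
  have hnum : 0 < a + s := by nlinarith
  have hz0 : 0 < zstar := by
    show 0 < (a + s) / (2 * μ)
    positivity
  -- derivative of g
  have hderiv : ∀ z : ℝ, 0 < z → HasDerivAt g (1 - y / z + μ * (z - z')) z := by
    intro z hz
    have h1 : HasDerivAt (fun z : ℝ => z - y * Real.log z) (1 - y * z⁻¹) z :=
      (hasDerivAt_id z).sub ((Real.hasDerivAt_log hz.ne').const_mul y)
    have h2 : HasDerivAt (fun z : ℝ => (μ / 2) * (z - z') ^ 2)
        ((μ / 2) * (2 * (z - z') ^ 1 * 1)) z :=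
      (((hasDerivAt_id z).sub_const z').pow 2).const_mul (μ / 2)
    have := h1.add h2
    refine this.congr_deriv ?_
    ring
  have hquad : μ * zstar ^ 2 + (1 - μ * z') * zstar - y = 0 := by
    have hzdef : zstar = (a + s) / (2 * μ) := rfl
    rw [hzdef]
    have h2μ : (2 * μ) ≠ 0 := by positivity
    field_simp
    linear_combination hs2 + 2 * (a + s) * ha
  -- sign of the derivative
  have hsign : ∀ z : ℝ, 0 < z →
      1 - y / z + μ * (z - z') = (z - zstar) * (y / (z * zstar) + μ) := by
    intro z hz
    field_simp
    linear_combination z * hquad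
  have hcont : ContinuousOn g (Set.Ioi (0 : ℝ)) := by
    intro z hz
    exact ((hderiv z hz).continuousAt).continuousWithinAt
  have hanti : StrictAntiOn g (Set.Ioc (0 : ℝ) zstar) := by
    apply strictAntiOn_of_deriv_neg (convex_Ioc 0 zstar)
    · exact hcont.mono Set.Ioc_subset_Ioi_self
    · intro z hz
      rw [interior_Ioc] at hz
      have hz1 : 0 < z := hz.1
      have hz2 : z < zstar := hz.2
      rw [(hderiv z hz1).deriv, hsign z hz1]
      have hpos : 0 < y / (z * zstar) + μ := by positivity
      nlinarith
  have hmono : StrictMonoOn g (Set.Ici zstar) := by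
    apply strictMonoOn_of_deriv_pos (convex_Ici zstar)
    · exact hcont.mono (fun x hx => lt_of_lt_of_le hz0 hx)
    · intro z hz
      rw [interior_Ici] at hz
      have hz1 : 0 < z := hz0.trans hz
      rw [(hderiv z hz1).deriv, hsign z hz1]
      have hpos : 0 < y / (z * zstar) + μ := by positivity
      exact mul_pos (sub_pos.mpr hz) hpos
  refine ⟨hz0, fun z hz => ?_⟩
  rcases lt_trichotomy z zstar with h | h | h
  · have hlt : g zstar < g z :=
      hanti ⟨hz, h.le⟩ ⟨hz0, le_refl _⟩ h
    exact ⟨hlt.le, fun _ => hlt⟩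
  · subst h
    exact ⟨le_refl _, fun hne => absurd rfl hne⟩
  · have hlt : g zstar < g z :=
      hmono (le_refl zstar) h.le h
    exact ⟨hlt.le, fun _ => hlt⟩
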